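/- arXiv:2309.00946 — 2 statements merged into one kernel-verified Lean document; each statement's English description precedes it below -/
import Mathlib

section
/- Let A[1] < ... < A[n] be n ≥ 2 distinct integers and k ≥ 1. Under the equal-length binning of [A[1], A[n]] into k bins, every bin contains at most min(n, ⌊(L/k)/G_min⌋ + 1) elements of A, where L = A[n]-A[1] and G_min is the minimum gap. Consequently if a search in a dictionary on m elements takes at most f(m) steps with f monotone nondecreasing, then a search in the binned learned dictionary (one constant-time bin lookup plus a search within the predicted bin) takes at most 1 + f(min(n, ⌊(L/k)/G_min⌋ + 1)) steps. -/
/-- Every bin contains at most `min(n, ⌊(L/k)/G_min⌋ + 1)` elements; hence with a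
monotone search-cost function `f`, the learned-dictionary search (one bin lookup plus a search
in the predicted bin) costs at most `1 + f(min(n, ⌊(L/k)/G_min⌋ + 1))`. -/
theorem stmt3 (n k : ℕ) (hn : 2 ≤ n) (hk : 1 ≤ k) (A : ℕ → ℤ)
    (hA : ∀ i, i + 1 < n → A i < A (i + 1)) (f : ℕ → ℕ) (hf : Monotone f) :
    let G : ℕ → ℤ := fun i => A (i + 1) - A i
    let Gmin : ℤ := (Finset.range (n - 1)).inf' (Finset.nonempty_range_iff.mpr (by omega)) G
    let L : ℤ := A (n - 1) - A 0
    let bin : ℤ → ℤ := fun x =>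
      if x = A 0 then 1 else ⌈(((x - A 0 : ℤ) : ℚ) * (k : ℚ)) / ((L : ℚ))⌉
    let bound : ℕ := min n ((⌊((L : ℚ) / (k : ℚ)) / (Gmin : ℚ)⌋).toNat + 1)
    ∀ b : ℤ,
      ((Finset.range n).filter (fun i => bin (A i) = b)).card ≤ bound ∧
      1 + f (((Finset.range n).filter (fun i => bin (A i) = b)).card) ≤ 1 + f bound := by
  intro G Gmin L bin bound b
  have hGminpos : 0 < Gmin := by
    rw [show Gmin = _ from rfl, Finset.lt_inf'_iff]
    intro i hi
    have := hA i (by simp at hi; omega)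
    simp only [G]; omega
  have key : ∀ i j, i ≤ j → j < n → (j - i : ℤ) * Gmin ≤ A j - A i := by
    intro i j hij hj
    induction j, hij using Nat.le_induction with
    | base => simp
    | succ j hij ih =>
      have h1 := ih (by omega)
      have hG : Gmin ≤ G j :=
        Finset.inf'_le _ (Finset.mem_range.mpr (by omega))
      have hGj : G j = A (j + 1) - A j := rfl
      have : ((j + 1 : ℕ) - i : ℤ) = ((j : ℤ) - i) + 1 := by push_cast; ring
      rw [this]
      linarith [hGj ▸ hG]
  have hLpos : 0 < L := by
    have := key 0 (n - 1) (by omega) (by omega)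
    have h1 : (1 : ℤ) ≤ ((n - 1 : ℕ) : ℤ) - ((0 : ℕ) : ℤ) := by
      have : (1 : ℕ) ≤ n - 1 := by omega
      push_cast; omega
    have h2 : (1 : ℤ) * Gmin ≤ (((n - 1 : ℕ) : ℤ) - ((0 : ℕ) : ℤ)) * Gmin :=
      mul_le_mul_of_nonneg_right h1 hGminpos.le
    show 0 < A (n - 1) - A 0
    linarith
  set S := (Finset.range n).filter (fun i => bin (A i) = b) with hS
  have hbound1 : 1 ≤ bound := by
    simp only [bound]; omega
  have hcard : S.card ≤ bound := by
    by_cases hc : S.card ≤ 1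
    · omega
    · have hne : S.Nonempty := Finset.card_pos.mp (by omega)
      set i := S.min' hne with hi
      set j := S.max' hne with hj
      have hiS : i ∈ S := S.min'_mem hne
      have hjS : j ∈ S := S.max'_mem hne
      have hij : i ≤ j := S.min'_le j hjS
      have hjn : j < n := by
        have := (Finset.mem_filter.mp hjS).1; simp at this; omega
      have hbi : bin (A i) = b := (Finset.mem_filter.mp hiS).2
      have hbj : bin (A j) = b := (Finset.mem_filter.mp hjS).2
      -- card ≤ j - i + 1
      have hsub : S ⊆ Finset.Icc i j := by
        intro x hx
        exact Finset.mem_Icc.mpr ⟨S.min'_le x hx, S.le_max' x hx⟩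
      have hcard2 : S.card ≤ j - i + 1 := by
        have := Finset.card_le_card hsub
        rw [Nat.card_Icc] at this
        omega
      -- A 0 ≤ A i ≤ A j
      have hA0i : A 0 ≤ A i := by
        have := key 0 i (by omega) (by omega)
        nlinarith [mul_nonneg (show (0:ℤ) ≤ (i : ℤ) - (0:ℕ) by push_cast; omega) hGminpos.le]
      have hgap : ((j : ℤ) - i) * Gmin ≤ A j - A i := key i j hij hjn
      -- A j - A i bounded by L/k in ℚ : (A j - A i) * k ≤ L
      have hkq : (0 : ℚ) < (k : ℚ) := by positivity
      have hLq : (0 : ℚ) < (L : ℚ) := by exact_mod_cast hLpos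
      have hdiff : ((A j - A i : ℤ) : ℚ) * (k : ℚ) ≤ (L : ℚ) := by
        by_cases hAi : A i = A 0
        · by_cases hAj : A j = A 0
          · rw [hAj, hAi]; simp; positivity
          · have hb : bin (A j) = 1 := by rw [hbj, ← hbi]; simp [bin, hAi]
            simp only [bin, if_neg hAj] at hb
            have := Int.ceil_le.mp hb.le
            rw [div_le_iff₀ hLq] at this
            rw [hAi]
            push_cast at this ⊢
            linarith
        · have hAj : A j ≠ A 0 := by
            intro h
            have h2 : A i ≤ A j := by nlinarith [mul_nonneg (show (0:ℤ) ≤ (j:ℤ) - i by push_cast; omega) hGminpos.le]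
            omega
          have hb : bin (A i) = bin (A j) := by rw [hbi, hbj]
          simp only [bin, if_neg hAi, if_neg hAj] at hb
          have h1 := Int.le_ceil ((((A j - A 0 : ℤ) : ℚ) * (k : ℚ)) / ((L : ℚ)))
          have h2 := Int.ceil_lt_add_one ((((A i - A 0 : ℤ) : ℚ) * (k : ℚ)) / ((L : ℚ)))
          rw [← hb] at h1
          have h3 : (((A j - A 0 : ℤ) : ℚ) * (k : ℚ)) / ((L : ℚ))
              - (((A i - A 0 : ℤ) : ℚ) * (k : ℚ)) / ((L : ℚ)) < 1 := by linarith
          rw [div_sub_div_same, div_lt_one hLq] at h3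
          push_cast at h3 ⊢
          linarith
      -- combine
      have hGq : (0 : ℚ) < (Gmin : ℚ) := by exact_mod_cast hGminpos
      have hgapq : (((j : ℤ) - i : ℤ) : ℚ) * (Gmin : ℚ) ≤ ((A j - A i : ℤ) : ℚ) := by
        exact_mod_cast hgap
      have hfin : ((S.card : ℚ) - 1) ≤ ((L : ℚ) / (k : ℚ)) / (Gmin : ℚ) := by
        rw [le_div_iff₀ hGq, le_div_iff₀ hkq]
        have hji : ((S.card : ℚ) - 1) ≤ (((j : ℤ) - i : ℤ) : ℚ) := by
          have : (S.card : ℤ) - 1 ≤ (j : ℤ) - i := by push_cast; omega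
          exact_mod_cast this
        have e1 : ((S.card : ℚ) - 1) * (Gmin : ℚ) ≤ (((j : ℤ) - i : ℤ) : ℚ) * (Gmin : ℚ) :=
          mul_le_mul_of_nonneg_right hji hGq.le
        have e2 : ((S.card : ℚ) - 1) * (Gmin : ℚ) * (k : ℚ) ≤ ((A j - A i : ℤ) : ℚ) * (k : ℚ) :=
          mul_le_mul_of_nonneg_right (le_trans e1 hgapq) hkq.le
        linarith
      have hfloor : (S.card : ℤ) - 1 ≤ ⌊((L : ℚ) / (k : ℚ)) / (Gmin : ℚ)⌋ := by
        rw [Int.le_floor]; push_cast; linarith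
      have hfl0 : 0 ≤ ⌊((L : ℚ) / (k : ℚ)) / (Gmin : ℚ)⌋ := by omega
      have : S.card ≤ (⌊((L : ℚ) / (k : ℚ)) / (Gmin : ℚ)⌋).toNat + 1 := by omega
      simp only [bound]
      have hcardn : S.card ≤ n := by
        calc S.card ≤ (Finset.range n).card := Finset.card_le_card (Finset.filter_subset _ _)
        _ = n := Finset.card_range n
      omega
  exact ⟨hcard, Nat.add_le_add_left (hf hcard) 1⟩
end

section
/- Suppose elements of a finite set A of size n are drawn from a universe U so that when U is divided into f_1(n) = c·n equal bins (0 < c ≤ 1 constant), each element independently lands in any fixed bin with probability at most β·f_2(n)/n where f_2(n) = (log n)^d for constants β, d. Then for n large enough, the probability that some bin contains more than e·β·(log n)^d + 2·log n elements is at most 1/n. -/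
open MeasureTheory ProbabilityTheory

lemma aux_chernoff {Ω : Type} [MeasurableSpace Ω] {μ : Measure Ω} [IsProbabilityMeasure μ]
    {n K : ℕ} (hn : 0 < n) {X : Fin n → Ω → Fin K} (hX : ∀ i, Measurable (X i))
    (hInd : iIndepFun X μ) {M : ℝ} (hM : 0 ≤ M)
    (hprob : ∀ (i : Fin n) (b : Fin K), μ {ω | X i ω = b} ≤ ENNReal.ofReal (M / n))
    (b : Fin K) (a : ℝ) :
    μ {ω | a ≤ ((Finset.univ.filter (fun i => X i ω = b)).card : ℝ)}
      ≤ ENNReal.ofReal (Real.exp (M - Real.log 2 * a)) := by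
  classical
  set t := Real.log 2 with ht_def
  have ht : 0 ≤ t := Real.log_nonneg one_le_two
  set Y : Fin n → Ω → ℝ := fun i ω => if X i ω = b then 1 else 0 with hY
  have hYm : ∀ i, Measurable (Y i) := fun i =>
    Measurable.ite ((hX i) (measurableSet_singleton b)) measurable_const measurable_const
  have hYind : iIndepFun Y μ := by
    have := hInd.comp (g := fun _ (x : Fin K) => if x = b then (1:ℝ) else 0)
      (fun _ => measurable_of_countable _)
    exact this
  have hY01 : ∀ i ω, Y i ω = 0 ∨ Y i ω = 1 := by
    intro i ω; by_cases h : X i ω = b <;> simp [hY, h]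
  have hexpY : ∀ i ω, Real.exp (t * Y i ω) = 1 + Y i ω := by
    intro i ω
    rcases hY01 i ω with h | h <;> · rw [h]; simp [ht_def, Real.exp_log two_pos] <;> norm_num
  -- mgf of each indicator
  have hYint : ∀ i, Integrable (Y i) μ := by
    intro i
    have : Y i = Set.indicator ((X i) ⁻¹' {b}) (fun _ => (1:ℝ)) := by
      funext ω; simp [hY, Set.indicator_apply]
    rw [this]
    exact (integrable_const (1:ℝ)).indicator ((hX i) (measurableSet_singleton b))
  have hmgf_le : ∀ i, mgf (Y i) μ t ≤ Real.exp (M / n) := by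
    intro i
    have h1 : mgf (Y i) μ t = 1 + ∫ ω, Y i ω ∂μ := by
      rw [mgf]
      calc (∫ ω, Real.exp (t * Y i ω) ∂μ) = ∫ ω, (1 + Y i ω) ∂μ := by
            congr 1; funext ω; exact hexpY i ω
        _ = (∫ _ω, (1:ℝ) ∂μ) + ∫ ω, Y i ω ∂μ := integral_add (integrable_const 1) (hYint i)
        _ = 1 + ∫ ω, Y i ω ∂μ := by simp
    have h2 : (∫ ω, Y i ω ∂μ) = (μ ((X i) ⁻¹' {b})).toReal := by
      have : Y i = Set.indicator ((X i) ⁻¹' {b}) (fun _ => (1:ℝ)) := by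
        funext ω; simp [hY, Set.indicator_apply]
      rw [this, integral_indicator_const (1:ℝ) ((hX i) (measurableSet_singleton b))]
      simp
      rfl
    have hp0 : 0 ≤ M / n := div_nonneg hM (Nat.cast_nonneg n)
    have h3 : (μ ((X i) ⁻¹' {b})).toReal ≤ M / n := by
      have := hprob i b
      have h4 : (μ {ω | X i ω = b}).toReal ≤ (ENNReal.ofReal (M / n)).toReal :=
        ENNReal.toReal_mono ENNReal.ofReal_ne_top this
      rwa [ENNReal.toReal_ofReal hp0] at h4
    calc mgf (Y i) μ t = 1 + (μ ((X i) ⁻¹' {b})).toReal := by rw [h1, h2]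
      _ ≤ 1 + M / n := by linarith
      _ ≤ Real.exp (M / n) := by linarith [Real.add_one_le_exp (M / n)]
  -- mgf of the sum
  have hmgf_sum : mgf (∑ i, Y i) μ t ≤ Real.exp M := by
    rw [hYind.mgf_sum hYm Finset.univ]
    calc (∏ i, mgf (Y i) μ t) ≤ ∏ _i : Fin n, Real.exp (M / n) :=
          Finset.prod_le_prod (fun i _ => mgf_nonneg) (fun i _ => hmgf_le i)
      _ = Real.exp (M / n) ^ n := by simp
      _ = Real.exp (n * (M / n)) := by rw [← Real.exp_nat_mul]
      _ = Real.exp M := by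
          congr 1
          field_simp
  -- integrability of exp(t * S)
  have hSmeas : Measurable (∑ i, Y i) := by
    have : (∑ i, Y i) = fun ω => ∑ i, Y i ω := by funext ω; simp
    rw [this]
    exact Finset.measurable_sum _ (fun i _ => hYm i)
  have hSbound : ∀ ω, (∑ i, Y i) ω ≤ n := by
    intro ω
    rw [Finset.sum_apply]
    calc (∑ i, Y i ω) ≤ ∑ _i : Fin n, (1:ℝ) :=
          Finset.sum_le_sum (fun i _ => by rcases hY01 i ω with h | h <;> simp [h])
      _ = n := by simp
  have hS0 : ∀ ω, 0 ≤ (∑ i, Y i) ω := by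
    intro ω
    rw [Finset.sum_apply]
    exact Finset.sum_nonneg (fun i _ => by rcases hY01 i ω with h | h <;> simp [h])
  have hint : Integrable (fun ω => Real.exp (t * (∑ i, Y i) ω)) μ := by
    refine Integrable.mono' (integrable_const (Real.exp (t * n)))
      ((hSmeas.const_mul t).exp.aestronglyMeasurable) (ae_of_all _ fun ω => ?_)
    rw [Real.norm_eq_abs, Real.abs_exp]
    exact Real.exp_le_exp.mpr (mul_le_mul_of_nonneg_left (hSbound ω) ht)
  -- Chernoff
  have hch := measure_ge_le_exp_mul_mgf (X := ∑ i, Y i) (μ := μ) (t := t) a ht hint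
  have hset : {ω | a ≤ ((Finset.univ.filter (fun i => X i ω = b)).card : ℝ)}
      = {ω | a ≤ (∑ i, Y i) ω} := by
    ext ω
    simp only [Set.mem_setOf_eq, Finset.sum_apply]
    rw [hY]
    norm_num [Finset.sum_boole]
  rw [hset]
  have hfin : μ {ω | a ≤ (∑ i, Y i) ω} ≠ ⊤ := measure_ne_top _ _
  rw [← ENNReal.ofReal_toReal hfin]
  apply ENNReal.ofReal_le_ofReal
  calc (μ {ω | a ≤ (∑ i, Y i) ω}).toReal ≤ Real.exp (-t * a) * mgf (∑ i, Y i) μ t := hch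
    _ ≤ Real.exp (-t * a) * Real.exp M := by
        exact mul_le_mul_of_nonneg_left hmgf_sum (Real.exp_nonneg _)
    _ = Real.exp (M - t * a) := by rw [← Real.exp_add]; ring_nf

/-- balls into bins under a smooth distribution: if each of `n` independent
elements lands in any fixed one of `K = c·n` bins with probability at most `β·(log₂ n)^d / n`,
then for `n` large enough, with probability at least `1 - 1/n` no bin receives more than
`e·β·(log₂ n)^d + 2·log₂ n` elements. -/
theorem stmt8 (β : ℝ) (hβ : 0 < β) (d : ℕ) (c : ℝ) (hc : 0 < c) (hc1 : c ≤ 1) :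
    ∃ n₀ : ℕ, ∀ n : ℕ, n₀ ≤ n →
      ∀ (Ω : Type) (_ : MeasurableSpace Ω) (μ : Measure Ω), IsProbabilityMeasure μ →
      ∀ (K : ℕ), (K : ℝ) = c * n →
      ∀ (X : Fin n → Ω → Fin K), (∀ i, Measurable (X i)) →
      iIndepFun X μ →
      (∀ (i : Fin n) (b : Fin K),
          μ {ω | X i ω = b} ≤ ENNReal.ofReal (β * (Real.logb 2 n) ^ d / n)) →
      μ {ω | ∃ b : Fin K,
          Real.exp 1 * β * (Real.logb 2 n) ^ d + 2 * Real.logb 2 n <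
            ((Finset.univ.filter (fun i => X i ω = b)).card : ℝ)} ≤ (1 : ENNReal) / n := by
  refine ⟨1, fun n hn Ω mΩ μ hμ K hK X hX hInd hprob => ?_⟩
  have hn0 : 0 < n := hn
  have hnR : (0:ℝ) < n := Nat.cast_pos.mpr hn0
  have hnR1 : (1:ℝ) ≤ n := Nat.one_le_cast.mpr hn
  set L : ℝ := Real.logb 2 n with hL_def
  have hL : 0 ≤ L := Real.logb_nonneg one_lt_two hnR1
  set M : ℝ := β * L ^ d with hM_def
  have hM : 0 ≤ M := mul_nonneg hβ.le (pow_nonneg hL d)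
  set a : ℝ := Real.exp 1 * β * L ^ d + 2 * L with ha_def
  set r : ℝ := Real.exp (M - Real.log 2 * a) with hr_def
  -- per-bin bound
  have hbin : ∀ b : Fin K,
      μ {ω | a ≤ ((Finset.univ.filter (fun i => X i ω = b)).card : ℝ)}
        ≤ ENNReal.ofReal r :=
    fun b => aux_chernoff hn0 hX hInd hM hprob b a
  -- exponent bound : r ≤ 1/(n*n)
  have hlog2 : (0.6931471803 : ℝ) < Real.log 2 := Real.log_two_gt_d9
  have hexp1 : (2:ℝ) ≤ Real.exp 1 := by
    have := Real.add_one_le_exp (1:ℝ)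
    linarith
  have hel : (1:ℝ) ≤ Real.log 2 * Real.exp 1 := by nlinarith
  have hlogL : Real.log 2 * L = Real.log n := by
    rw [hL_def, Real.logb, mul_div_cancel₀]
    exact Real.log_ne_zero_of_pos_of_ne_one two_pos (by norm_num)
  have hrle : r ≤ 1 / ((n:ℝ) * n) := by
    have h1 : M - Real.log 2 * a ≤ -(2 * Real.log n) := by
      have : Real.log 2 * a = Real.log 2 * Real.exp 1 * M + 2 * Real.log n := by
        rw [ha_def, hM_def]
        rw [mul_add]
        rw [show Real.log 2 * (2 * L) = 2 * (Real.log 2 * L) by ring, hlogL]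
        ring
      rw [this]
      nlinarith
    calc r ≤ Real.exp (-(2 * Real.log n)) := Real.exp_le_exp.mpr h1
      _ = 1 / ((n:ℝ) * n) := by
          rw [Real.exp_neg, two_mul, Real.exp_add, Real.exp_log hnR, one_div]
  -- union bound
  have hsub : {ω | ∃ b : Fin K,
      Real.exp 1 * β * (Real.logb 2 n) ^ d + 2 * Real.logb 2 n <
        ((Finset.univ.filter (fun i => X i ω = b)).card : ℝ)}
      ⊆ ⋃ b : Fin K, {ω | a ≤ ((Finset.univ.filter (fun i => X i ω = b)).card : ℝ)} := by
    rintro ω ⟨b, hb⟩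
    exact Set.mem_iUnion.mpr ⟨b, le_of_lt hb⟩
  calc μ _ ≤ μ (⋃ b : Fin K, {ω | a ≤ ((Finset.univ.filter (fun i => X i ω = b)).card : ℝ)}) :=
        measure_mono hsub
    _ ≤ ∑' b : Fin K, μ {ω | a ≤ ((Finset.univ.filter (fun i => X i ω = b)).card : ℝ)} :=
        measure_iUnion_le _
    _ ≤ ∑' _b : Fin K, ENNReal.ofReal r := ENNReal.tsum_le_tsum (fun b => hbin b)
    _ = (K : ENNReal) * ENNReal.ofReal r := by
        rw [tsum_fintype]
        simp [Finset.sum_const, nsmul_eq_mul]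
    _ ≤ (K : ENNReal) * ENNReal.ofReal (1 / ((n:ℝ) * n)) := by
        exact mul_le_mul_right (ENNReal.ofReal_le_ofReal hrle) _
    _ = ENNReal.ofReal ((K:ℝ) * (1 / ((n:ℝ) * n))) := by
        rw [ENNReal.ofReal_mul (Nat.cast_nonneg K), ENNReal.ofReal_natCast]
    _ ≤ ENNReal.ofReal (1 / (n:ℝ)) := by
        apply ENNReal.ofReal_le_ofReal
        rw [hK]
        rw [show c * (n:ℝ) * (1 / ((n:ℝ) * n)) = c / n by field_simp]
        gcongr
    _ = (1 : ENNReal) / n := by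
        rw [ENNReal.ofReal_div_of_pos hnR, ENNReal.ofReal_one, ENNReal.ofReal_natCast]
end
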